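/- Let Aℓ : Matrix Xℓ Yℓ ℚ, r : Yℓ → ℚ, Ar : Matrix Xr Yr ℚ, and c : Xr → ℚ. If the matrix obtained by appending r as an extra row to Aℓ (Matrix.fromRows Aℓ (row r)) is totally unimodular, and the matrix obtained by prepending c as an extra column to Ar (Matrix.fromCols (col c) Ar) is totally unimodular, then the 2-sum matrix Matrix.fromBlocks Aℓ 0 (fun i j => c i * r j) Ar is totally unimodular. -/

import Mathlib

open Matrix

private lemma neg_mem_signTypeCastRange {x : ℚ} (hx : x ∈ Set.range SignType.cast) :
    -x ∈ Set.range SignType.cast := by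
  obtain ⟨s, rfl⟩ := hx
  exact ⟨-s, by rw [SignType.coe_neg]⟩

private lemma mul_mem_signTypeCastRange {x y : ℚ} (hx : x ∈ Set.range SignType.cast)
    (hy : y ∈ Set.range SignType.cast) : x * y ∈ Set.range SignType.cast := by
  obtain ⟨s, rfl⟩ := hx
  obtain ⟨t, rfl⟩ := hy
  exact ⟨s * t, by rw [SignType.coe_mul]⟩

private lemma det_submatrix_equiv_mem_iff {K K' : Type*} [Fintype K] [DecidableEq K]
    [Fintype K'] [DecidableEq K'] (N : Matrix K' K' ℚ) (a b : K ≃ K') :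
    (N.submatrix a b).det ∈ Set.range SignType.cast ↔ N.det ∈ Set.range SignType.cast := by
  have h : N.submatrix ⇑a ⇑b = (N.submatrix id ⇑(a.symm.trans b)).submatrix ⇑a ⇑a := by
    ext i j
    simp
  rw [h, Matrix.det_submatrix_equiv_self, Matrix.det_permute']
  rcases Int.units_eq_one_or (Equiv.Perm.sign (a.symm.trans b)) with hs | hs <;> rw [hs]
  · simp
  · constructor
    · intro hx
      have := neg_mem_signTypeCastRange hx
      simpa using this
    · intro hx
      have := neg_mem_signTypeCastRange hx
      simpa using this

private lemma det_submatrix_mem_iff' {K K' R C : Type*} [Fintype K] [DecidableEq K]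
    [Fintype K'] [DecidableEq K'] (N : Matrix R C ℚ) (a : K ≃ R) (b : K ≃ C)
    (a' : K' ≃ R) (b' : K' ≃ C) :
    (N.submatrix a b).det ∈ Set.range SignType.cast ↔
      (N.submatrix a' b').det ∈ Set.range SignType.cast := by
  have h : N.submatrix ⇑a ⇑b
      = (N.submatrix ⇑a' ⇑b').submatrix ⇑(a.trans a'.symm) ⇑(b.trans b'.symm) := by
    ext i j
    simp
  rw [h]
  exact det_submatrix_equiv_mem_iff _ _ _

private lemma det_eq_zero_of_rows_in_span {n : Type*} [Fintype n] [DecidableEq n]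
    (M : Matrix n n ℚ) {ι η : Type*} [Fintype ι] [Fintype η] {t : ι → n}
    (ht : Function.Injective t) (v : η → n → ℚ)
    (hspan : ∀ i, M (t i) ∈ Submodule.span ℚ (Set.range v))
    (hcard : Fintype.card η < Fintype.card ι) : M.det = 0 := by
  by_contra hdet
  have hunit : IsUnit M := M.isUnit_iff_isUnit_det.mpr (isUnit_iff_ne_zero.mpr hdet)
  have hLI : LinearIndependent ℚ (fun i => M i) := linearIndependent_rows_iff_isUnit.mpr hunit
  have hLI2 : LinearIndependent ℚ (fun i : ι => M (t i)) := hLI.comp t ht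
  have hLI3 : LinearIndependent ℚ (fun i : ι =>
      (⟨M (t i), hspan i⟩ : Submodule.span ℚ (Set.range v))) :=
    LinearIndependent.of_comp (Submodule.span ℚ (Set.range v)).subtype hLI2
  have h1 := hLI3.fintype_card_le_finrank
  have h2 : Module.finrank ℚ ↥(Submodule.span ℚ (Set.range v)) ≤ Fintype.card η :=
    finrank_range_le_card v
  omega


private lemma sum_decompose {α β γ : Type*} [Fintype γ] [DecidableEq γ] (f : γ → α ⊕ β) :
    ∃ k₁ k₂ : ℕ, ∃ F : Fin k₁ ⊕ Fin k₂ ≃ γ, ∃ f₁ : Fin k₁ → α, ∃ f₂ : Fin k₂ → β,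
      (∀ a, f (F (Sum.inl a)) = Sum.inl (f₁ a)) ∧ (∀ b, f (F (Sum.inr b)) = Sum.inr (f₂ b)) := by
  classical
  set p : γ → Prop := fun i => (f i).isLeft
  set e₁ := Fintype.equivFin {i // p i}
  set e₂ := Fintype.equivFin {i // ¬ p i}
  refine ⟨_, _, (Equiv.sumCongr e₁.symm e₂.symm).trans (Equiv.sumCompl p), ?_, ?_, ?_, ?_⟩
  · intro a
    exact (f (e₁.symm a).val).getLeft (e₁.symm a).property
  · intro b
    refine (f (e₂.symm b).val).getRight ?_
    have := (e₂.symm b).property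
    simpa [p, Sum.not_isLeft] using this
  · intro a
    simp only [Equiv.trans_apply, Equiv.sumCongr_apply, Sum.map_inl, Equiv.sumCompl_apply_inl]
    exact (Sum.inl_getLeft _ _).symm
  · intro b
    simp only [Equiv.trans_apply, Equiv.sumCongr_apply, Sum.map_inr, Equiv.sumCompl_apply_inr]
    exact (Sum.inr_getRight _ _).symm

private lemma core {k₁ k₂ l₁ l₂ : ℕ} (P : Matrix (Fin k₁) (Fin l₁) ℚ) (r' : Fin l₁ → ℚ)
    (c' : Fin k₂ → ℚ) (Q : Matrix (Fin k₂) (Fin l₂) ℚ)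
    (hP : (fromRows P (replicateRow Unit r')).IsTotallyUnimodular)
    (hQ : (fromCols (replicateCol Unit c') Q).IsTotallyUnimodular)
    (e : Fin k₁ ⊕ Fin k₂ ≃ Fin l₁ ⊕ Fin l₂) :
    ((fromBlocks P 0 (fun i j => c' i * r' j) Q).submatrix id ⇑e).det ∈
      Set.range SignType.cast := by
  have hcard : k₁ + k₂ = l₁ + l₂ := by simpa using Fintype.card_congr e
  rcases lt_trichotomy l₁ k₁ with hl | hl | hl
  · -- more rows than columns available for the top-left block: determinant is zero
    refine ⟨0, ?_⟩
    rw [SignType.coe_zero]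
    refine (det_eq_zero_of_rows_in_span _ (Sum.inl_injective (α := Fin k₁) (β := Fin k₂))
      (fun (b : Fin l₁) (j : Fin k₁ ⊕ Fin k₂) => if e j = Sum.inl b then (1:ℚ) else 0)
      ?_ (by simpa using hl)).symm
    intro a
    have hrow : (fromBlocks P 0 (fun i j => c' i * r' j) Q).submatrix id ⇑e (Sum.inl a) =
        ∑ b : Fin l₁, P a b • fun j => if e j = Sum.inl b then (1:ℚ) else 0 := by
      funext j
      rw [Finset.sum_apply]
      simp only [Pi.smul_apply, smul_eq_mul, mul_ite, mul_one, mul_zero]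
      rcases h : e j with b₀ | b₀ <;> simp [submatrix, h, Sum.inl.injEq, eq_comm, fromBlocks]
    rw [hrow]
    exact Submodule.sum_mem _ fun b _ =>
      Submodule.smul_mem _ _ (Submodule.subset_span ⟨b, rfl⟩)
  · -- square diagonal blocks
    have hk₂ : l₂ = k₂ := by omega
    set eSq : Fin k₁ ⊕ Fin k₂ ≃ Fin l₁ ⊕ Fin l₂ :=
      Equiv.sumCongr (finCongr hl.symm) (finCongr hk₂.symm) with heSq
    set N₀ := (fromBlocks P 0 (fun i j => c' i * r' j) Q).submatrix id ⇑eSq with hN₀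
    have key : (fromBlocks P 0 (fun i j => c' i * r' j) Q).submatrix id ⇑e
        = N₀.submatrix ⇑(Equiv.refl (Fin k₁ ⊕ Fin k₂)) ⇑(e.trans eSq.symm) := by
      ext i j
      simp [N₀]
    rw [key, det_submatrix_equiv_mem_iff]
    have hN₀eq : N₀ = fromBlocks (P.submatrix id ⇑(finCongr hl.symm)) 0
        (fun i j => c' i * r' (finCongr hl.symm j)) (Q.submatrix id ⇑(finCongr hk₂.symm)) := by
      ext i j
      cases i <;> cases j <;> simp [N₀, eSq, fromBlocks]
    rw [hN₀eq]; erw [det_fromBlocks_zero₁₂]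
    apply mul_mem_signTypeCastRange
    · have h1 := (isTotallyUnimodular_iff_fintype _).mp hP (Fin k₁) Sum.inl ⇑(finCongr hl.symm)
      have h2 : (fromRows P (replicateRow Unit r')).submatrix Sum.inl ⇑(finCongr hl.symm)
          = P.submatrix id ⇑(finCongr hl.symm) := by
        ext i j
        simp
      rwa [h2] at h1
    · have h1 := (isTotallyUnimodular_iff_fintype _).mp hQ (Fin k₂) id
        (Sum.inr ∘ ⇑(finCongr hk₂.symm))
      have h2 : (fromCols (replicateCol Unit c') Q).submatrix id (Sum.inr ∘ ⇑(finCongr hk₂.symm))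
          = Q.submatrix id ⇑(finCongr hk₂.symm) := by
        ext i j
        simp
      rwa [h2] at h1
  · rcases Nat.lt_or_ge (k₁ + 1) l₁ with hbig | hsmall
    · -- bottom rows dependent
      refine ⟨0, ?_⟩
      rw [SignType.coe_zero]
      refine (det_eq_zero_of_rows_in_span _ (Sum.inr_injective (α := Fin k₁) (β := Fin k₂))
        (Sum.elim (fun (_ : Unit) (j : Fin k₁ ⊕ Fin k₂) => Sum.elim r' (fun _ => (0:ℚ)) (e j))
          (fun (b : Fin l₂) (j : Fin k₁ ⊕ Fin k₂) => if e j = Sum.inr b then (1:ℚ) else 0))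
        ?_ (by simp; omega)).symm
      intro d
      have hrow : (fromBlocks P 0 (fun i j => c' i * r' j) Q).submatrix id ⇑e (Sum.inr d) =
          c' d • (fun j => Sum.elim r' (fun _ => (0:ℚ)) (e j)) +
          ∑ b : Fin l₂, Q d b • fun j => if e j = Sum.inr b then (1:ℚ) else 0 := by
        funext j
        rw [Pi.add_apply, Finset.sum_apply]
        simp only [Pi.smul_apply, smul_eq_mul, mul_ite, mul_one, mul_zero]
        rcases h : e j with b₀ | b₀ <;> simp [submatrix, h, Sum.inr.injEq, eq_comm, fromBlocks]
      rw [hrow]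
      refine Submodule.add_mem _ (Submodule.smul_mem _ _ (Submodule.subset_span ⟨Sum.inl (), rfl⟩))
        (Submodule.sum_mem _ fun b _ =>
          Submodule.smul_mem _ _ (Submodule.subset_span ⟨Sum.inr b, rfl⟩))
    · -- l₁ = k₁ + 1 : the factorization case
      have hl₁ : l₁ = k₁ + 1 := by omega
      have hk₂' : k₂ = 1 + l₂ := by omega
      set B₁ := fromRows P (replicateRow Unit r') with hB₁
      set B₂ := fromCols (replicateCol Unit c') Q with hB₂
      set X : Matrix (Fin k₁ ⊕ Fin k₂) (Fin k₁ ⊕ (Unit ⊕ Fin l₂)) ℚ :=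
        fromBlocks 1 0 0 B₂ with hX
      set Y : Matrix (Fin k₁ ⊕ (Unit ⊕ Fin l₂)) (Fin l₁ ⊕ Fin l₂) ℚ :=
        (fromBlocks B₁ 0 0 (1 : Matrix (Fin l₂) (Fin l₂) ℚ)).submatrix
          ⇑(Equiv.sumAssoc (Fin k₁) Unit (Fin l₂)).symm id with hY
      have hXY : fromBlocks P 0 (fun i j => c' i * r' j) Q = X * Y := by
        ext i j
        cases i <;> cases j <;>
          simp [X, Y, B₁, B₂, mul_apply, Fintype.sum_sum_type, one_apply,
            Equiv.sumAssoc, fromCols, Finset.sum_ite_eq, Finset.sum_ite_eq',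
            Finset.mul_sum, mul_ite, mul_one, mul_zero, fromBlocks]
      set ψ : Fin k₂ ≃ Unit ⊕ Fin l₂ :=
        (finCongr hk₂').trans ((finSumFinEquiv (m := 1) (n := l₂)).symm.trans
          (Equiv.sumCongr finOneEquiv (Equiv.refl (Fin l₂)))) with hψ
      set φ : (Fin k₁ ⊕ Fin k₂) ≃ (Fin k₁ ⊕ (Unit ⊕ Fin l₂)) :=
        Equiv.sumCongr (Equiv.refl (Fin k₁)) ψ with hφ
      rw [hXY, ← submatrix_mul_equiv X Y id φ ⇑e, det_mul]
      apply mul_mem_signTypeCastRange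
      · -- det of X.submatrix id φ
        have hXeq : X.submatrix id ⇑φ = fromBlocks 1 0 0 (B₂.submatrix id ⇑ψ) := by
          ext i j
          cases i <;> cases j <;> simp [X, φ]
        rw [hXeq, det_fromBlocks_zero₁₂, det_one, one_mul]
        exact (isTotallyUnimodular_iff_fintype _).mp hQ (Fin k₂) id ⇑ψ
      · -- det of Y.submatrix φ e
        have hYeq : Y.submatrix ⇑φ ⇑e = (fromBlocks B₁ 0 0 (1 : Matrix (Fin l₂) (Fin l₂) ℚ)).submatrix
            ⇑(φ.trans (Equiv.sumAssoc (Fin k₁) Unit (Fin l₂)).symm) ⇑e := by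
          ext i j
          simp [Y]
        rw [hYeq]
        set ρ : Fin l₁ ≃ Fin k₁ ⊕ Unit :=
          (finCongr hl₁).trans ((finSumFinEquiv (m := k₁) (n := 1)).symm.trans
            (Equiv.sumCongr (Equiv.refl (Fin k₁)) finOneEquiv)) with hρ
        rw [det_submatrix_mem_iff' _ _ _ (Equiv.sumCongr ρ (Equiv.refl (Fin l₂)))
          (Equiv.refl (Fin l₁ ⊕ Fin l₂))]
        have hfin : (fromBlocks B₁ 0 0 (1 : Matrix (Fin l₂) (Fin l₂) ℚ)).submatrix
            ⇑(Equiv.sumCongr ρ (Equiv.refl (Fin l₂))) ⇑(Equiv.refl (Fin l₁ ⊕ Fin l₂))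
            = fromBlocks (B₁.submatrix ⇑ρ id) 0 0 (1 : Matrix (Fin l₂) (Fin l₂) ℚ) := by
          ext i j
          cases i <;> cases j <;> simp [ρ]
        rw [hfin, det_fromBlocks_zero₁₂, det_one, mul_one]
        exact (isTotallyUnimodular_iff_fintype _).mp hP (Fin l₁) ⇑ρ id


/-- If appending the row `r` to `Aₗ` gives a totally unimodular matrix and prepending
the column `c` to `Aᵣ` gives a totally unimodular matrix, then the 2-sum matrix
`[[Aₗ, 0], [c ⊗ r, Aᵣ]]` is totally unimodular. -/
theorem matrixSum2_isTotallyUnimodular {Xₗ Yₗ Xᵣ Yᵣ : Type*}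
    (Aₗ : Matrix Xₗ Yₗ ℚ) (r : Yₗ → ℚ) (Aᵣ : Matrix Xᵣ Yᵣ ℚ) (c : Xᵣ → ℚ)
    (hAₗ : (Matrix.fromRows Aₗ (Matrix.replicateRow Unit r)).IsTotallyUnimodular)
    (hAᵣ : (Matrix.fromCols (Matrix.replicateCol Unit c) Aᵣ).IsTotallyUnimodular) :
    (Matrix.fromBlocks Aₗ 0 (fun i j => c i * r j) Aᵣ).IsTotallyUnimodular := by
  intro k f g hf hg
  obtain ⟨k₁, k₂, F, f₁, f₂, hF₁, hF₂⟩ := sum_decompose f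
  obtain ⟨l₁, l₂, G, g₁, g₂, hG₁, hG₂⟩ := sum_decompose g
  have hcard : k₁ + k₂ = l₁ + l₂ := by
    have h1 : k₁ + k₂ = k := by simpa using Fintype.card_congr F
    have h2 : l₁ + l₂ = k := by simpa using Fintype.card_congr G
    omega
  set χ : Fin k₁ ⊕ Fin k₂ ≃ Fin l₁ ⊕ Fin l₂ :=
    (finSumFinEquiv.trans (finCongr hcard)).trans finSumFinEquiv.symm with hχ
  set M := ((fromBlocks Aₗ 0 (fun i j => c i * r j) Aᵣ).submatrix (f ∘ ⇑F) (g ∘ ⇑G)).submatrix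
    id ⇑χ with hM
  have hMeq : (fromBlocks Aₗ 0 (fun i j => c i * r j) Aᵣ).submatrix f g =
      M.submatrix ⇑F.symm ⇑(G.symm.trans χ.symm) := by
    ext i j
    simp [M]
  rw [hMeq, det_submatrix_equiv_mem_iff]
  have hinner : (fromBlocks Aₗ 0 (fun i j => c i * r j) Aᵣ).submatrix (f ∘ ⇑F) (g ∘ ⇑G)
      = fromBlocks (Aₗ.submatrix f₁ g₁) 0
          (fun i j => (c ∘ f₂) i * (r ∘ g₁) j) (Aᵣ.submatrix f₂ g₂) := by
    ext i j
    cases i <;> cases j <;> simp [hF₁, hF₂, hG₁, hG₂, fromBlocks]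
  rw [hM, hinner]
  apply core
  · have heq : fromRows (Aₗ.submatrix f₁ g₁) (replicateRow Unit (r ∘ g₁))
        = (fromRows Aₗ (replicateRow Unit r)).submatrix (Sum.map f₁ id) g₁ := by
      ext i j
      cases i <;> simp
    rw [heq]
    exact hAₗ.submatrix _ _
  · have heq : fromCols (replicateCol Unit (c ∘ f₂)) (Aᵣ.submatrix f₂ g₂)
        = (fromCols (replicateCol Unit c) Aᵣ).submatrix f₂ (Sum.map id g₂) := by
      ext i j
      cases j <;> simp
    rw [heq]
    exact hAᵣ.submatrix _ _
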